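/- The upper-semicontinuous Banach bundle topology on $\A$ constructed from a set $\Gamma$ of local sections is a continuous Banach bundle (i.e., the norm is continuous on the total space) if and only if for every $\xi\in\Gamma$ the map $x\mapsto\|\xi(x)\|$ is continuous on $\mathrm{dom}(\xi)$. -/

import Mathlib

open Topology TopologicalSpace

/-- A local section of the disjoint union of the Banach spaces `E x` over an open set
`dom ⊆ X`; its values off `dom` are irrelevant. -/
structure LocalSection (X : Type*) [TopologicalSpace X] (E : X → Type*)
    [∀ x, NormedAddCommGroup (E x)] where
  dom : Set X
  isOpen_dom : IsOpen dom
  val : ∀ x, E x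

variable {X : Type*} [TopologicalSpace X] {E : X → Type*}
  [∀ x, NormedAddCommGroup (E x)] [∀ x, NormedSpace ℂ (E x)] [∀ x, CompleteSpace (E x)]

/-- The basic set `Ω(U, ξ, ε) = {v : p v ∈ U, ‖v - ξ(p v)‖ < ε}`. -/
def Omega (ξ : LocalSection X E) (U : Set X) (ε : ℝ) : Set (Σ x, E x) :=
  {v | v.1 ∈ U ∧ ‖v.2 - ξ.val v.1‖ < ε}

/-- The collection of all sets `Ω(U, ξ, ε)` with `ξ ∈ Γ`, `U ⊆ dom ξ` open, `ε > 0`. -/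
def basisSets (Γ : Set (LocalSection X E)) : Set (Set (Σ x, E x)) :=
  {O | ∃ ξ ∈ Γ, ∃ U : Set X, IsOpen U ∧ U ⊆ ξ.dom ∧ ∃ ε : ℝ, 0 < ε ∧ O = Omega ξ U ε}

/-- The upper-semicontinuous Banach bundle topology constructed from a
set `Γ` of local sections (the topology generated by the sets `Ω(U, ξ, ε)`) is a
continuous Banach bundle — i.e. the norm is continuous on the total space — if and only
if for every `ξ ∈ Γ` the map `x ↦ ‖ξ x‖` is continuous on `dom ξ`. -/
theorem stmt_4 (Γ : Set (LocalSection X E))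
    (h1 : ∀ v : Σ x, E x, ∃ ξ ∈ Γ, v.1 ∈ ξ.dom ∧ ξ.val v.1 = v.2)
    (h2 : ∀ (n : ℕ) (c : Fin n → ℂ) (ξ : Fin n → LocalSection X E),
      (∀ i, ξ i ∈ Γ) → ∀ α : ℝ, 0 < α →
        IsOpen {x : X | (∀ i, x ∈ (ξ i).dom) ∧ ‖∑ i, c i • (ξ i).val x‖ < α}) :
    (@Continuous (Σ x, E x) ℝ (TopologicalSpace.generateFrom (basisSets Γ)) _
        (fun v => ‖v.2‖)) ↔
      ∀ ξ ∈ Γ, ContinuousOn (fun x => ‖ξ.val x‖) ξ.dom := by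
  letI : TopologicalSpace (Σ x, E x) := TopologicalSpace.generateFrom (basisSets Γ)
  constructor
  · intro hcont ξ hξ
    have hsec : ContinuousOn (fun x => (⟨x, ξ.val x⟩ : Σ x, E x)) ξ.dom := by
      rw [continuousOn_iff_continuous_restrict]
      apply continuous_generateFrom_iff.mpr
      rintro O ⟨η, hη, U, hU, hUdom, ε, hε, rfl⟩
      have hT : IsOpen {x : X | (x ∈ ξ.dom ∧ x ∈ η.dom) ∧ ‖ξ.val x - η.val x‖ < ε} := by
        have := h2 2 ![1, -1] ![ξ, η] (by
          intro i; fin_cases i <;> simpa) ε hε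
        convert this using 1
        ext x
        simp [Fin.forall_fin_two, Fin.sum_univ_two, sub_eq_add_neg]
      have hpre : (ξ.dom.domRestrict (fun x => (⟨x, ξ.val x⟩ : Σ x, E x))) ⁻¹' Omega η U ε
          = Subtype.val ⁻¹'
            (U ∩ {x : X | (x ∈ ξ.dom ∧ x ∈ η.dom) ∧ ‖ξ.val x - η.val x‖ < ε}) := by
        ext ⟨x, hx⟩
        constructor
        · rintro ⟨hxU, hlt⟩
          exact ⟨hxU, ⟨hx, hUdom hxU⟩, hlt⟩
        · rintro ⟨hxU, _, hlt⟩
          exact ⟨hxU, hlt⟩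
      rw [hpre]
      exact (hU.inter hT).preimage continuous_subtype_val
    exact hcont.comp_continuousOn hsec
  · intro h
    rw [continuous_iff_continuousAt]
    intro v
    obtain ⟨ξ, hξ, hdom, hval⟩ := h1 v
    rw [ContinuousAt, Metric.tendsto_nhds]
    intro δ hδ
    have hc : ContinuousWithinAt (fun x => ‖ξ.val x‖) ξ.dom v.1 := h ξ hξ v.1 hdom
    rw [ContinuousWithinAt, nhdsWithin_eq_nhds.mpr (ξ.isOpen_dom.mem_nhds hdom)] at hc
    have hc2 := Metric.tendsto_nhds.mp hc (δ/2) (by linarith)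
    obtain ⟨V, hV, hVopen, hvV⟩ := eventually_nhds_iff.mp hc2
    have hOmem : Omega ξ (V ∩ ξ.dom) (δ/2) ∈ basisSets Γ :=
      ⟨ξ, hξ, V ∩ ξ.dom, hVopen.inter ξ.isOpen_dom, Set.inter_subset_right, δ/2,
        by linarith, rfl⟩
    have hOopen : IsOpen (Omega ξ (V ∩ ξ.dom) (δ/2)) :=
      TopologicalSpace.GenerateOpen.basic _ hOmem
    have hvO : v ∈ Omega ξ (V ∩ ξ.dom) (δ/2) := by
      refine ⟨⟨hvV, hdom⟩, ?_⟩
      rw [hval]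
      simpa using (by linarith : (0:ℝ) < δ/2)
    filter_upwards [hOopen.mem_nhds hvO] with w hw
    obtain ⟨⟨hwV, hwdom⟩, hwlt⟩ := hw
    have e1 : |‖w.2‖ - ‖ξ.val w.1‖| < δ/2 :=
      lt_of_le_of_lt (abs_norm_sub_norm_le _ _) hwlt
    have e2 : dist ‖ξ.val w.1‖ ‖v.2‖ < δ/2 := by
      have := hV w.1 hwV
      rwa [hval] at this
    rw [Real.dist_eq] at e2 ⊢
    calc |‖w.2‖ - ‖v.2‖| ≤ |‖w.2‖ - ‖ξ.val w.1‖| + |‖ξ.val w.1‖ - ‖v.2‖| := abs_sub_le _ _ _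
      _ < δ/2 + δ/2 := by exact add_lt_add e1 e2
      _ = δ := by ring
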